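/- Let V be a finite-dimensional complex vector space, A an invertible linear map on V, B a linear map, and suppose there are no nonzero proper subspaces of V invariant under both A and B. If v is a nonzero eigenvector of B and each A^m v is again an eigenvector of B, then {v, Av, A^2 v, ..., A^n v} (where n + 1 = dim V) is a basis of V. -/

import Mathlib

theorem stmt13 {V : Type*} [AddCommGroup V] [Module ℂ V] [FiniteDimensional ℂ V]
    (n : ℕ) (hn : Module.finrank ℂ V = n + 1)
    (A B : Module.End ℂ V) (hA : Function.Bijective A)
    (hsimple : ∀ W : Submodule ℂ V, (∀ x ∈ W, A x ∈ W) → (∀ x ∈ W, B x ∈ W) →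
      W = ⊥ ∨ W = ⊤)
    (v : V) (hv : v ≠ 0) (lam : ℂ) (heig : B v = lam • v)
    (heigs : ∀ m : ℕ, ∃ μ : ℂ, B ((A ^ m) v) = μ • ((A ^ m) v)) :
    LinearIndependent ℂ (fun i : Fin (n + 1) => (A ^ (i : ℕ)) v) ∧
      Submodule.span ℂ (Set.range fun i : Fin (n + 1) => (A ^ (i : ℕ)) v) = ⊤ := by
  classical
  set f : ℕ → V := fun m => (A ^ m) v with hf
  have hf0 : f 0 = v := by simp [hf]
  have hstep : ∀ m, A (f m) = f (m + 1) := by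
    intro m
    simp [hf, pow_succ', Module.End.mul_apply]
  obtain ⟨k, hk1, hPk, hmem⟩ :
      ∃ k, 1 ≤ k ∧ LinearIndependent ℂ (fun i : Fin k => f i) ∧
        f k ∈ Submodule.span ℂ (Set.range fun i : Fin k => f i) := by
    set P : ℕ → Prop := fun k => LinearIndependent ℂ (fun i : Fin k => f i) with hP
    have hP1 : P 1 := by
      rw [hP]
      refine linearIndependent_unique_iff.2 ?_
      simpa [hf] using hv
    have hnotbig : ∀ m, n + 1 < m → ¬ P m := by
      intro m hm hPm
      have := hPm.fintype_card_le_finrank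
      simp only [Fintype.card_fin, hn] at this
      omega
    refine ⟨Nat.findGreatest P (n + 1), ?_, ?_, ?_⟩
    · exact Nat.le_findGreatest (by omega) hP1
    · exact Nat.findGreatest_spec (by omega : 1 ≤ n + 1) hP1
    · have hnot : ¬ P (Nat.findGreatest P (n + 1) + 1) := by
        rcases le_or_gt (Nat.findGreatest P (n + 1) + 1) (n + 1) with h | h
        · exact Nat.findGreatest_is_greatest (Nat.lt_succ_self _) h
        · exact hnotbig _ h
      by_contra hx
      apply hnot
      have heq : (fun i : Fin (Nat.findGreatest P (n + 1) + 1) => f i) =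
          Fin.snoc (fun i : Fin (Nat.findGreatest P (n + 1)) => f i)
            (f (Nat.findGreatest P (n + 1))) := by
        funext i
        refine Fin.lastCases ?_ ?_ i
        · simp
        · intro j
          simp
      show LinearIndependent ℂ (fun i : Fin (Nat.findGreatest P (n + 1) + 1) => f i)
      rw [heq]
      exact linearIndependent_fin_snoc.2
        ⟨Nat.findGreatest_spec (by omega : 1 ≤ n + 1) hP1, hx⟩
  set W := Submodule.span ℂ (Set.range fun i : Fin k => f i) with hW
  have hgen : ∀ i : Fin k, f i ∈ W := fun i => Submodule.subset_span ⟨i, rfl⟩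
  have hnext : ∀ i : Fin k, f (i + 1) ∈ W := by
    intro i
    rcases Nat.lt_or_ge ((i : ℕ) + 1) k with h | h
    · exact hgen ⟨(i : ℕ) + 1, h⟩
    · have h' : (i : ℕ) + 1 = k := le_antisymm i.isLt h
      rw [h']; exact hmem
  have hAinv : ∀ x ∈ W, A x ∈ W := by
    intro x hx
    induction hx using Submodule.span_induction with
    | mem x hx => obtain ⟨i, rfl⟩ := hx; rw [hstep]; exact hnext i
    | zero => simp
    | add x y _ _ hx hy => rw [map_add]; exact W.add_mem hx hy
    | smul c x _ hx => rw [map_smul]; exact W.smul_mem c hx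
  have hBinv : ∀ x ∈ W, B x ∈ W := by
    intro x hx
    induction hx using Submodule.span_induction with
    | mem x hx =>
        obtain ⟨i, rfl⟩ := hx
        obtain ⟨μ, hμ⟩ := heigs i
        have : B (f i) = μ • f i := hμ
        rw [this]
        exact W.smul_mem μ (hgen i)
    | zero => simp
    | add x y _ _ hx hy => rw [map_add]; exact W.add_mem hx hy
    | smul c x _ hx => rw [map_smul]; exact W.smul_mem c hx
  have hWtop : W = ⊤ := by
    rcases hsimple W hAinv hBinv with h | h
    · exfalso
      apply hv
      have hm : f 0 ∈ W := hgen ⟨0, hk1⟩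
      rw [h] at hm
      simpa [hf0] using hm
    · exact h
  have hrank : Module.finrank ℂ W = k := by
    rw [hW, finrank_span_eq_card hPk, Fintype.card_fin]
  have hkeq : k = n + 1 := by
    rw [hWtop] at hrank
    rw [finrank_top, hn] at hrank
    omega
  subst hkeq
  exact ⟨hPk, hWtop⟩
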